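/- Let A be a Hopf algebra over a commutative ring k with antipode S. Let ψ : A → k be a k-linear functional, let g and δ be units of A with g·g = δ⁻¹ and S(g) = g⁻¹, and assume that for every c ∈ A one has: ψ(c·S(a)) = ψ(c·a) for all a ∈ A if and only if S(c) = c·δ. Then for every central element z of A: ψ(g·z·S(a)) = ψ(g·z·a) for all a ∈ A if and only if S(z) = z. -/

import Mathlib

open HopfAlgebra

section Helpers

open Coalgebra TensorProduct


variable {k A : Type*} [CommRing k] [Ring A] [HopfAlgebra k A] {ι κ : Type*}

lemma sum_counit_smul_right' (a : A) (r : Coalgebra.Repr k a ι) :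
    ∑ i ∈ r.index, counit (R := k) (r.left i) • r.right i = a := by
  have h := congrArg (TensorProduct.lid k A) (Coalgebra.sum_counit_tmul_eq r)
  rw [map_sum] at h
  simp only [TensorProduct.lid_tmul, one_smul] at h
  exact h

lemma sum_counit_smul_left' (a : A) (r : Coalgebra.Repr k a ι) :
    ∑ i ∈ r.index, counit (R := k) (r.right i) • r.left i = a := by
  have h := congrArg (TensorProduct.rid k A) (Coalgebra.sum_tmul_counit_eq r)
  rw [map_sum] at h
  simp only [TensorProduct.rid_tmul, one_smul] at h
  exact h

/-- Repr of a product. -/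
noncomputable def mulRepr (a b : A) (ra : Coalgebra.Repr k a ι) (rb : Coalgebra.Repr k b κ) :
    Coalgebra.Repr k (a * b) (ι × κ) where
  index := ra.index ×ˢ rb.index
  left := fun p => ra.left p.1 * rb.left p.2
  right := fun p => ra.right p.1 * rb.right p.2
  eq := by
    rw [Bialgebra.comul_mul, ← ra.eq, ← rb.eq, Finset.sum_mul_sum, Finset.sum_product]
    simp [Algebra.TensorProduct.tmul_mul_tmul]

lemma convL1 (a b : A) (ra : Coalgebra.Repr k a ι) (rb : Coalgebra.Repr k b κ) :
    ∑ i ∈ ra.index, ∑ j ∈ rb.index,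
      antipode (R := k) (ra.left i * rb.left j) * (ra.right i * rb.right j) =
      (counit (R := k) a * counit (R := k) b) • (1 : A) := by
  have h := HopfAlgebra.sum_antipode_mul_eq_smul (R := k) (mulRepr a b ra rb)
  rw [Bialgebra.counit_mul] at h
  simpa [mulRepr, Finset.sum_product] using h

lemma convL2 (a b : A) (ra : Coalgebra.Repr k a ι) (rb : Coalgebra.Repr k b κ) :
    ∑ i ∈ ra.index, ∑ j ∈ rb.index,
      (ra.left i * rb.left j) *
        (antipode (R := k) (rb.right j) * antipode (R := k) (ra.right i)) =
      (counit (R := k) a * counit (R := k) b) • (1 : A) := by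
  have hb := HopfAlgebra.sum_mul_antipode_eq_smul (R := k) rb
  have ha := HopfAlgebra.sum_mul_antipode_eq_smul (R := k) ra
  calc ∑ i ∈ ra.index, ∑ j ∈ rb.index, (ra.left i * rb.left j) *
        (antipode (R := k) (rb.right j) * antipode (R := k) (ra.right i))
      = ∑ i ∈ ra.index, ra.left i *
          ((∑ j ∈ rb.index, rb.left j * antipode (R := k) (rb.right j)) *
            antipode (R := k) (ra.right i)) := by
        simp_rw [Finset.sum_mul, Finset.mul_sum]
        exact Finset.sum_congr rfl fun i _ => Finset.sum_congr rfl fun j _ => by simp [mul_assoc]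
    _ = ∑ i ∈ ra.index, counit (R := k) b • (ra.left i * antipode (R := k) (ra.right i)) := by
        rw [hb]; exact Finset.sum_congr rfl fun i _ => by
          rw [smul_mul_assoc, mul_smul_comm, one_mul]
    _ = (counit (R := k) a * counit (R := k) b) • (1 : A) := by
        rw [← Finset.smul_sum, ha, smul_smul, mul_comm]

lemma coassocShift {κ₁ Λ₁ : ι → Type*} (a : A) (r : Coalgebra.Repr k a ι)
    (rl : ∀ i : ι, Coalgebra.Repr k (r.left i) (κ₁ i))
    (rr : ∀ i : ι, Coalgebra.Repr k (r.right i) (Λ₁ i))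
    (f g h : A →ₗ[k] A) :
    ∑ i ∈ r.index, ∑ j ∈ (rl i).index,
      f ((rl i).left j) * (g ((rl i).right j) * h (r.right i)) =
    ∑ i ∈ r.index, ∑ j ∈ (rr i).index,
      f (r.left i) * (g ((rr i).left j) * h ((rr i).right j)) := by
  have key := Coalgebra.sum_map_tmul_tmul_eq (R := k) f g h a (repr := r) (a₁ := rl) (a₂ := rr)
  have h2 := congrArg (LinearMap.mul' k A ∘ₗ LinearMap.lTensor A (LinearMap.mul' k A)) key
  simpa [map_sum, LinearMap.mul'_apply] using h2.symm

theorem antipode_mul_rev (a b : A) :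
    antipode (R := k) (a * b) = antipode (R := k) b * antipode (R := k) a := by
  classical
  set S : A →ₗ[k] A := antipode (R := k) with hS
  let ra : Coalgebra.Repr k a (A × A) := Coalgebra.Repr.arbitrary k a
  let rb : Coalgebra.Repr k b (A × A) := Coalgebra.Repr.arbitrary k b
  let rla : ∀ i : A × A, Coalgebra.Repr k (ra.left i) (A × A) := fun i => Coalgebra.Repr.arbitrary k _
  let rra : ∀ i : A × A, Coalgebra.Repr k (ra.right i) (A × A) := fun i => Coalgebra.Repr.arbitrary k _
  let rlb : ∀ j : A × A, Coalgebra.Repr k (rb.left j) (A × A) := fun j => Coalgebra.Repr.arbitrary k _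
  let rrb : ∀ j : A × A, Coalgebra.Repr k (rb.right j) (A × A) := fun j => Coalgebra.Repr.arbitrary k _
  have hI : (∑ j ∈ rb.index, ∑ l ∈ (rlb j).index, ∑ i ∈ ra.index, ∑ x ∈ (rla i).index,
      S ((rla i).left x * (rlb j).left l) *
        (((rla i).right x * (rlb j).right l) * (S (rb.right j) * S (ra.right i))))
      = S b * S a := by
    calc ∑ j ∈ rb.index, ∑ l ∈ (rlb j).index, ∑ i ∈ ra.index, ∑ x ∈ (rla i).index,
        S ((rla i).left x * (rlb j).left l) *
          (((rla i).right x * (rlb j).right l) * (S (rb.right j) * S (ra.right i)))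
        = ∑ j ∈ rb.index, ∑ i ∈ ra.index, ∑ x ∈ (rla i).index, ∑ l ∈ (rlb j).index,
            S ((rla i).left x * (rlb j).left l) *
              (((rla i).right x * (rlb j).right l) * (S (rb.right j) * S (ra.right i))) := by
          refine Finset.sum_congr rfl fun j _ => ?_
          rw [Finset.sum_comm]
          exact Finset.sum_congr rfl fun i _ => Finset.sum_comm
      _ = ∑ j ∈ rb.index, ∑ i ∈ ra.index,
            (counit (R := k) (ra.left i) * counit (R := k) (rb.left j)) •
              (S (rb.right j) * S (ra.right i)) := by
          refine Finset.sum_congr rfl fun j _ => Finset.sum_congr rfl fun i _ => ?_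
          have := convL1 (ra.left i) (rb.left j) (rla i) (rlb j)
          calc ∑ x ∈ (rla i).index, ∑ l ∈ (rlb j).index,
              S ((rla i).left x * (rlb j).left l) *
                (((rla i).right x * (rlb j).right l) * (S (rb.right j) * S (ra.right i)))
              = (∑ x ∈ (rla i).index, ∑ l ∈ (rlb j).index,
                  S ((rla i).left x * (rlb j).left l) *
                    ((rla i).right x * (rlb j).right l)) *
                  (S (rb.right j) * S (ra.right i)) := by
                simp_rw [Finset.sum_mul, mul_assoc]
            _ = (counit (R := k) (ra.left i) * counit (R := k) (rb.left j)) •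
                  (S (rb.right j) * S (ra.right i)) := by
                rw [this, smul_mul_assoc, one_mul]
      _ = (∑ j ∈ rb.index, counit (R := k) (rb.left j) • S (rb.right j)) *
            (∑ i ∈ ra.index, counit (R := k) (ra.left i) • S (ra.right i)) := by
          rw [Finset.sum_mul_sum]
          refine Finset.sum_congr rfl fun j _ => Finset.sum_congr rfl fun i _ => ?_
          rw [mul_smul, smul_mul_assoc, mul_smul_comm, smul_comm]
      _ = S b * S a := by
          simp_rw [← map_smul]
          rw [← map_sum, ← map_sum, sum_counit_smul_right' a ra, sum_counit_smul_right' b rb]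
  have hII : (∑ j ∈ rb.index, ∑ l ∈ (rlb j).index, ∑ i ∈ ra.index, ∑ x ∈ (rla i).index,
      S ((rla i).left x * (rlb j).left l) *
        (((rla i).right x * (rlb j).right l) * (S (rb.right j) * S (ra.right i))))
      = S (a * b) := by
    calc ∑ j ∈ rb.index, ∑ l ∈ (rlb j).index, ∑ i ∈ ra.index, ∑ x ∈ (rla i).index,
        S ((rla i).left x * (rlb j).left l) *
          (((rla i).right x * (rlb j).right l) * (S (rb.right j) * S (ra.right i)))
        = ∑ j ∈ rb.index, ∑ l ∈ (rlb j).index, ∑ i ∈ ra.index, ∑ x ∈ (rra i).index,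
            S (ra.left i * (rlb j).left l) *
              (((rra i).left x * (rlb j).right l) * (S (rb.right j) * S ((rra i).right x))) := by
          refine Finset.sum_congr rfl fun j _ => Finset.sum_congr rfl fun l _ => ?_
          simpa using coassocShift a ra rla rra
            (S ∘ₗ LinearMap.mulRight k ((rlb j).left l))
            (LinearMap.mulRight k ((rlb j).right l))
            (LinearMap.mulLeft k (S (rb.right j)) ∘ₗ S)
      _ = ∑ i ∈ ra.index, ∑ x ∈ (rra i).index, ∑ j ∈ rb.index, ∑ l ∈ (rlb j).index,
            S (ra.left i * (rlb j).left l) *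
              (((rra i).left x * (rlb j).right l) * (S (rb.right j) * S ((rra i).right x))) := by
          calc ∑ j ∈ rb.index, ∑ l ∈ (rlb j).index, ∑ i ∈ ra.index, ∑ x ∈ (rra i).index,
              S (ra.left i * (rlb j).left l) *
                (((rra i).left x * (rlb j).right l) * (S (rb.right j) * S ((rra i).right x)))
              = ∑ j ∈ rb.index, ∑ i ∈ ra.index, ∑ l ∈ (rlb j).index, ∑ x ∈ (rra i).index,
                  S (ra.left i * (rlb j).left l) *
                    (((rra i).left x * (rlb j).right l) * (S (rb.right j) * S ((rra i).right x))) :=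
                Finset.sum_congr rfl fun j _ => Finset.sum_comm
            _ = ∑ i ∈ ra.index, ∑ j ∈ rb.index, ∑ l ∈ (rlb j).index, ∑ x ∈ (rra i).index,
                  S (ra.left i * (rlb j).left l) *
                    (((rra i).left x * (rlb j).right l) * (S (rb.right j) * S ((rra i).right x))) :=
                Finset.sum_comm
            _ = ∑ i ∈ ra.index, ∑ j ∈ rb.index, ∑ x ∈ (rra i).index, ∑ l ∈ (rlb j).index,
                  S (ra.left i * (rlb j).left l) *
                    (((rra i).left x * (rlb j).right l) * (S (rb.right j) * S ((rra i).right x))) :=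
                Finset.sum_congr rfl fun i _ => Finset.sum_congr rfl fun j _ => Finset.sum_comm
            _ = ∑ i ∈ ra.index, ∑ x ∈ (rra i).index, ∑ j ∈ rb.index, ∑ l ∈ (rlb j).index,
                  S (ra.left i * (rlb j).left l) *
                    (((rra i).left x * (rlb j).right l) * (S (rb.right j) * S ((rra i).right x))) :=
                Finset.sum_congr rfl fun i _ => Finset.sum_comm
      _ = ∑ i ∈ ra.index, ∑ x ∈ (rra i).index, ∑ j ∈ rb.index, ∑ l ∈ (rrb j).index,
            S (ra.left i * rb.left j) *
              (((rra i).left x * (rrb j).left l) * (S ((rrb j).right l) * S ((rra i).right x))) := by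
          refine Finset.sum_congr rfl fun i _ => Finset.sum_congr rfl fun x _ => ?_
          simpa using coassocShift b rb rlb rrb
            (S ∘ₗ LinearMap.mulLeft k (ra.left i))
            (LinearMap.mulLeft k ((rra i).left x))
            (LinearMap.mulRight k (S ((rra i).right x)) ∘ₗ S)
      _ = ∑ i ∈ ra.index, ∑ j ∈ rb.index,
            (counit (R := k) (ra.right i) * counit (R := k) (rb.right j)) •
              S (ra.left i * rb.left j) := by
          refine Finset.sum_congr rfl fun i _ => ?_
          rw [Finset.sum_comm]
          refine Finset.sum_congr rfl fun j _ => ?_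
          calc ∑ x ∈ (rra i).index, ∑ l ∈ (rrb j).index,
              S (ra.left i * rb.left j) *
                (((rra i).left x * (rrb j).left l) * (S ((rrb j).right l) * S ((rra i).right x)))
              = S (ra.left i * rb.left j) * ∑ x ∈ (rra i).index, ∑ l ∈ (rrb j).index,
                  ((rra i).left x * (rrb j).left l) *
                    (S ((rrb j).right l) * S ((rra i).right x)) := by
                simp_rw [Finset.mul_sum]
            _ = (counit (R := k) (ra.right i) * counit (R := k) (rb.right j)) •
                  S (ra.left i * rb.left j) := by
                rw [convL2 (ra.right i) (rb.right j) (rra i) (rrb j), mul_smul_comm, mul_one]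
      _ = S (a * b) := by
          have key : ∀ i ∈ ra.index, ∀ j ∈ rb.index,
              (counit (R := k) (ra.right i) * counit (R := k) (rb.right j)) •
                S (ra.left i * rb.left j) =
              S ((counit (R := k) (ra.right i) • ra.left i) *
                (counit (R := k) (rb.right j) • rb.left j)) := by
            intro i _ j _
            rw [smul_mul_smul_comm, map_smul]
          calc ∑ i ∈ ra.index, ∑ j ∈ rb.index,
              (counit (R := k) (ra.right i) * counit (R := k) (rb.right j)) •
                S (ra.left i * rb.left j)
              = ∑ i ∈ ra.index, ∑ j ∈ rb.index,
                  S ((counit (R := k) (ra.right i) • ra.left i) *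
                    (counit (R := k) (rb.right j) • rb.left j)) :=
                Finset.sum_congr rfl fun i hi => Finset.sum_congr rfl fun j hj => key i hi j hj
            _ = S ((∑ i ∈ ra.index, counit (R := k) (ra.right i) • ra.left i) *
                  (∑ j ∈ rb.index, counit (R := k) (rb.right j) • rb.left j)) := by
                rw [Finset.sum_mul_sum, map_sum]
                exact Finset.sum_congr rfl fun i _ => (map_sum S _ _).symm
            _ = S (a * b) := by
                rw [sum_counit_smul_left' a ra, sum_counit_smul_left' b rb]
  rw [← hI, hII]

end Helpers

/-- If `g`, `δ` are units with `g² = δ⁻¹` and `S(g) = g⁻¹`, and the functional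
`ψ` satisfies `ψ(c·S(—)) = ψ(c·—)` iff `S(c) = c·δ`, then for a central `z`:
`ψ(g·z·S(—)) = ψ(g·z·—)` iff `S(z) = z`. -/
theorem S_invariant_iff_S_fixed {k A : Type*} [CommRing k] [Ring A] [HopfAlgebra k A]
    (ψ : A →ₗ[k] k) (g δ : Aˣ)
    (hg2 : (g : A) * (g : A) = (↑δ⁻¹ : A))
    (hSg : antipode (R := k) (g : A) = (↑g⁻¹ : A))
    (hδ : ∀ c : A, (∀ a : A, ψ (c * antipode (R := k) a) = ψ (c * a)) ↔
      antipode (R := k) c = c * (δ : A)) :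
    ∀ z : A, (∀ x : A, z * x = x * z) →
      ((∀ a : A, ψ ((g : A) * z * antipode (R := k) a) = ψ ((g : A) * z * a)) ↔
        antipode (R := k) z = z) := by
  intro z hz
  rw [hδ ((g : A) * z)]
  have hSgz : antipode (R := k) ((g : A) * z) = antipode (R := k) z * (↑g⁻¹ : A) := by
    rw [antipode_mul_rev, hSg]
  have hu : g * g = δ⁻¹ := Units.ext hg2
  have hδval : (δ : A) = (↑g⁻¹ : A) * (↑g⁻¹ : A) := by
    have : δ = g⁻¹ * g⁻¹ := by rw [← mul_inv_rev, hu, inv_inv]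
    rw [this, Units.val_mul]
  have hgzδ : (g : A) * z * (δ : A) = z * (↑g⁻¹ : A) := by
    rw [hδval, ← hz (g : A), mul_assoc, Units.mul_inv_cancel_left]
  rw [hSgz, hgzδ]
  exact Units.mul_left_inj g⁻¹
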